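/- Let x_L ≤ x_R be integers and n_S := x_R − x_L + 1. Let θ be the right translation on ℓ²(ℤ) and, for x ∈ ℤ, let θ^x be the translation by x, (θ^x f)(y) := f(y − x). Let q_L and q_R be multiplication by the indicator functions of {x ∈ ℤ : x ≤ x_L − 1} and {x ∈ ℤ : x ≥ x_R + 1} respectively. Let h be a bounded operator on ℓ²(ℤ) with h* = h, h∘θ = θ∘h, and q_L∘h∘q_R = 0. Then ⟨δ_x, h δ₀⟩ = 0 for every x ∈ ℤ with |x| ≥ n_S + 1, and h = Σ_{x=−n_S}^{n_S} ⟨δ_x, h δ₀⟩ θ^x. -/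

import Mathlib

noncomputable section

/-- The Hilbert space `ℓ²(ℤ)` of square-summable complex-valued functions on `ℤ`. -/
abbrev ellTwo : Type := lp (fun _ : ℤ => ℂ) 2

/-- The Kronecker basis vector `δ_x ∈ ℓ²(ℤ)`. -/
def kron (x : ℤ) : ellTwo := lp.single 2 x (1 : ℂ)

/-- Let `x_L ≤ x_R` be integers and `n_S := x_R − x_L + 1`.  Let `Θ x` be the
translation by `x` on `ℓ²(ℤ)`, `(Θ x f)(y) = f(y − x)`, let `q_L`, `q_R` be multiplication by
the indicator functions of `{x ≤ x_L − 1}` and `{x ≥ x_R + 1}`.  Let `h` be a bounded operator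
with `h* = h`, `h∘θ = θ∘h` (where `θ = Θ 1`), and `q_L ∘ h ∘ q_R = 0`.  Then
`⟨δ_x, h δ₀⟩ = 0` for every `x` with `|x| ≥ n_S + 1`, and
`h = Σ_{x=−n_S}^{n_S} ⟨δ_x, h δ₀⟩ • Θ x`. -/
theorem stmt_8 (xL xR : ℤ) (hLR : xL ≤ xR)
    (qL qR : ellTwo →L[ℂ] ellTwo)
    (Θ : ℤ → (ellTwo →L[ℂ] ellTwo))
    (hqL : ∀ (f : ellTwo) (x : ℤ), (qL f) x = if x ≤ xL - 1 then f x else 0)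
    (hqR : ∀ (f : ellTwo) (x : ℤ), (qR f) x = if xR + 1 ≤ x then f x else 0)
    (hΘ : ∀ (z : ℤ) (f : ellTwo) (y : ℤ), (Θ z f) y = f (y - z))
    (h : ellTwo →L[ℂ] ellTwo)
    (hsa : IsSelfAdjoint h)
    (hcomm : h.comp (Θ 1) = (Θ 1).comp h)
    (hdecoupled : (qL.comp h).comp qR = 0) :
    (∀ x : ℤ, (xR - xL + 1) + 1 ≤ |x| →
        (inner ℂ (kron x) (h (kron 0)) : ℂ) = 0) ∧
      h = ∑ x ∈ Finset.Icc (-(xR - xL + 1)) (xR - xL + 1),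
            (inner ℂ (kron x) (h (kron 0)) : ℂ) • Θ x := by
  classical
  set n : ℤ := xR - xL + 1 with hn
  -- coordinates of kron
  have hkron : ∀ z x : ℤ, (kron z : ∀ _ : ℤ, ℂ) x = if x = z then 1 else 0 := by
    intro z x
    by_cases hxz : x = z
    · subst hxz; simp [kron, lp.single_apply_self]
    · simp [kron, lp.single_apply_ne _ _ _ hxz, hxz]
  -- inner with kron is the coordinate
  have hinner : ∀ (x : ℤ) (f : ellTwo), (inner ℂ (kron x) f : ℂ) = f x := by
    intro x f
    rw [kron, lp.inner_single_left]
    simp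
  set a : ℤ → ℂ := fun z => h (kron 0) z with ha
  -- pointwise group law for Θ
  have hΘadd : ∀ (z w : ℤ) (f : ellTwo), Θ z (Θ w f) = Θ (z + w) f := by
    intro z w f
    apply lp.ext
    funext y
    rw [hΘ, hΘ, hΘ, sub_sub]
  have hΘ0 : ∀ f : ellTwo, Θ 0 f = f := by
    intro f
    apply lp.ext
    funext y
    rw [hΘ, sub_zero]
  -- h commutes with all Θ z
  have hc1 : ∀ f : ellTwo, h (Θ 1 f) = Θ 1 (h f) := by
    intro f
    exact DFunLike.congr_fun hcomm f
  have hcneg1 : ∀ f : ellTwo, h (Θ (-1) f) = Θ (-1) (h f) := by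
    intro f
    have h1 : h f = Θ 1 (h (Θ (-1) f)) := by
      rw [← hc1, hΘadd]; norm_num [hΘ0]
    calc h (Θ (-1) f) = Θ (-1) (Θ 1 (h (Θ (-1) f))) := by
          rw [hΘadd]; norm_num [hΘ0]
      _ = Θ (-1) (h f) := by rw [← h1]
  have hcZ : ∀ (z : ℤ) (f : ellTwo), h (Θ z f) = Θ z (h f) := by
    intro z
    induction z using Int.induction_on with
    | zero => intro f; rw [hΘ0, hΘ0]
    | succ k ih =>
        intro f
        have e : ((k : ℤ) + 1) = 1 + (k : ℤ) := by ring
        rw [e, ← hΘadd, hc1, ih, hΘadd]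
    | pred k ih =>
        intro f
        have e : (-(k : ℤ) - 1) = -1 + -(k : ℤ) := by ring
        rw [e, ← hΘadd, hcneg1, ih, hΘadd]
  -- kron y = Θ y (kron 0)
  have hks : ∀ y : ℤ, Θ y (kron 0) = kron y := by
    intro y
    apply lp.ext
    funext x
    rw [hΘ, hkron, hkron]
    by_cases hxy : x = y
    · rw [if_pos hxy, if_pos (by omega)]
    · rw [if_neg hxy, if_neg (by omega)]
  -- matrix elements
  have hmat : ∀ x y : ℤ, h (kron y) x = a (x - y) := by
    intro x y
    rw [← hks y, hcZ, hΘ]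
  -- qR fixes kron y for y ≥ xR + 1
  have hqRk : ∀ y : ℤ, xR + 1 ≤ y → qR (kron y) = kron y := by
    intro y hy
    apply lp.ext
    funext x
    rw [hqR]
    split_ifs with hx
    · rfl
    · rw [hkron, if_neg]
      rintro rfl
      exact hx hy
  -- vanishing for z ≤ -(n+1)
  have hvanL : ∀ z : ℤ, z ≤ -(n + 1) → a z = 0 := by
    intro z hz
    set y : ℤ := xL - 1 - z with hy
    have hyR : xR + 1 ≤ y := by simp only [hn] at hz ⊢; omega
    have h0 : (qL.comp h).comp qR (kron y) = 0 := by rw [hdecoupled]; rfl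
    have h1 : (qL (h (qR (kron y)))) (xL - 1) = 0 := by
      have : qL (h (qR (kron y))) = (0 : ellTwo) := h0
      rw [this]
      rfl
    rw [hqL, if_pos le_rfl, hqRk y hyR, hmat] at h1
    have : xL - 1 - y = z := by omega
    rwa [this] at h1
  -- symmetry from self-adjointness
  have hsym : ∀ z : ℤ, a z = starRingEnd ℂ (a (-z)) := by
    intro z
    have h1 : (inner ℂ (h (kron z)) (kron 0) : ℂ) = inner ℂ (kron z) (h (kron 0)) :=
      hsa.isSymmetric (kron z) (kron 0)
    have h2 : (inner ℂ (h (kron z)) (kron 0) : ℂ) =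
        starRingEnd ℂ (inner ℂ (kron 0) (h (kron z))) := by
      rw [← inner_conj_symm]
    have h3 : (inner ℂ (kron 0) (h (kron z)) : ℂ) = a (-z) := by
      rw [hinner, hmat, zero_sub]
    have h4 : (inner ℂ (kron z) (h (kron 0)) : ℂ) = a z := by
      rw [hinner]
    rw [← h4, ← h1, h2, h3]
  -- full vanishing
  have hvanish : ∀ z : ℤ, n + 1 ≤ |z| → a z = 0 := by
    intro z hz
    rcases abs_cases z with ⟨he, _⟩ | ⟨he, _⟩ <;> rw [he] at hz
    · have : -z ≤ -(n + 1) := by omega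
      rw [hsym z, hvanL _ this, map_zero]
    · exact hvanL z (by omega)
  have hinner0 : ∀ x : ℤ, (inner ℂ (kron x) (h (kron 0)) : ℂ) = a x := by
    intro x
    rw [hinner]
  constructor
  · intro x hx
    rw [hinner0]
    exact hvanish x hx
  · -- equality of operators via density of the span of the kron basis
    have hb : Dense ((Submodule.span ℂ (Set.range kron) : Submodule ℂ ellTwo) : Set ellTwo) := by
      intro f
      have hsum : HasSum (fun i : ℤ => lp.single 2 i (f i)) f :=
        lp.hasSum_single (by norm_num) f
      refine mem_closure_of_tendsto hsum (Filter.Eventually.of_forall fun s => ?_)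
      refine Submodule.sum_mem _ fun i _ => ?_
      have hi : lp.single 2 i (f i) = f i • kron i := by
        rw [kron, ← lp.single_smul, smul_eq_mul, mul_one]
      rw [hi]
      exact Submodule.smul_mem _ _ (Submodule.subset_span ⟨i, rfl⟩)
    refine ContinuousLinearMap.ext_on hb ?_
    rintro _ ⟨y, rfl⟩
    apply lp.ext
    funext x
    have hL : h (kron y) x = a (x - y) := hmat x y
    have hR :
        ((∑ z ∈ Finset.Icc (-n) n, (inner ℂ (kron z) (h (kron 0)) : ℂ) • Θ z) (kron y)) x
          = ∑ z ∈ Finset.Icc (-n) n, a z * ((kron y : ∀ _ : ℤ, ℂ) (x - z)) := by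
      rw [ContinuousLinearMap.sum_apply, lp.coeFn_sum, Finset.sum_apply]
      refine Finset.sum_congr rfl fun z _ => ?_
      rw [ContinuousLinearMap.smul_apply, lp.coeFn_smul, Pi.smul_apply, hinner0, smul_eq_mul,
        hΘ]
    rw [hL, hR]
    have : ∀ z ∈ Finset.Icc (-n) n,
        a z * ((kron y : ∀ _ : ℤ, ℂ) (x - z)) = if z = x - y then a z else 0 := by
      intro z _
      rw [hkron]
      by_cases hzxy : z = x - y
      · rw [if_pos (by omega : x - z = y), if_pos hzxy, mul_one]
      · rw [if_neg (by omega : ¬ x - z = y), if_neg hzxy, mul_zero]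
    rw [Finset.sum_congr rfl this, Finset.sum_ite_eq' (Finset.Icc (-n) n) (x - y) a]
    by_cases hmem : x - y ∈ Finset.Icc (-n) n
    · rw [if_pos hmem]
    · rw [if_neg hmem]
      rw [Finset.mem_Icc] at hmem
      refine hvanish (x - y) ?_
      rcases abs_cases (x - y) with ⟨he, _⟩ | ⟨he, _⟩ <;> rw [he] <;> omega
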